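/- If p is a real polynomial of degree at most d with |p(x)| ≤ 5/6 for all x ∈ [−1,1], then |p'(0)| ≤ (5/6)·d². -/

import Mathlib

open Finset
open scoped Classical

namespace BF

noncomputable section

/-- flip the bits of `x` belonging to `B`. -/
def flipS {n : ℕ} (x : Fin n → Bool) (B : Finset (Fin n)) : Fin n → Bool :=
  fun i => if i ∈ B then !(x i) else x i

/-- flip the `i`-th bit of `x`. -/
def flip1 {n : ℕ} (x : Fin n → Bool) (i : Fin n) : Fin n → Bool :=
  fun j => if j = i then !(x j) else x j

/-- real value of a boolean. -/
def bval (b : Bool) : ℝ := if b then 1 else 0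

/-- coefficient of the monomial `∏_{i ∈ S} x_i` in the unique multilinear
real polynomial expansion of `f` (Möbius inversion over the subcube lattice). -/
def coeffS {n : ℕ} (f : (Fin n → Bool) → ℝ) (S : Finset (Fin n)) : ℝ :=
  ∑ T ∈ S.powerset, (-1 : ℝ) ^ (S.card - T.card) * f (fun i => decide (i ∈ T))

/-- degree of the multilinear expansion of a real-valued function on the cube. -/
def degF {n : ℕ} (f : (Fin n → Bool) → ℝ) : ℕ :=
  (Finset.univ.filter fun S : Finset (Fin n) => coeffS f S ≠ 0).sup Finset.card

/-- degree of a boolean function. -/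
def degB {n : ℕ} (f : (Fin n → Bool) → Bool) : ℕ := degF (fun x => bval (f x))

/-- block sensitivity of `f` at `x`. -/
def bsAt {n : ℕ} (f : (Fin n → Bool) → Bool) (x : Fin n → Bool) : ℕ :=
  (Finset.univ.filter fun 𝓑 : Finset (Finset (Fin n)) =>
      (∀ B ∈ 𝓑, f (flipS x B) ≠ f x) ∧
      ∀ A ∈ 𝓑, ∀ B ∈ 𝓑, A ≠ B → Disjoint A B).sup Finset.card

/-- block sensitivity of `f`. -/
def bs {n : ℕ} (f : (Fin n → Bool) → Bool) : ℕ := Finset.univ.sup (bsAt f)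

/-- sensitivity of `f` at `x`. -/
def sx {n : ℕ} (f : (Fin n → Bool) → Bool) (x : Fin n → Bool) : ℕ :=
  (Finset.univ.filter fun i => f (flip1 x i) ≠ f x).card

/-- (maximum) sensitivity of `f`. -/
def sens {n : ℕ} (f : (Fin n → Bool) → Bool) : ℕ := Finset.univ.sup (sx f)

/-- coordinate `i` is relevant for `f`. -/
def Rel {n : ℕ} (i : Fin n) (f : (Fin n → Bool) → Bool) : Prop :=
  ∃ x, f (flip1 x i) ≠ f x

/-- the set of relevant coordinates of `f`. -/
def relSet {n : ℕ} (f : (Fin n → Bool) → Bool) : Finset (Fin n) :=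
  Finset.univ.filter fun i => Rel i f

/-- the number of relevant variables `n(f)`. -/
def nrel {n : ℕ} (f : (Fin n → Bool) → Bool) : ℕ := (relSet f).card

/-- influence of coordinate `i` on `f` (uniform distribution). -/
def infl {n : ℕ} (f : (Fin n → Bool) → Bool) (i : Fin n) : ℝ :=
  ((Finset.univ.filter fun x : Fin n → Bool => f x ≠ f (flip1 x i)).card : ℝ) / 2 ^ n

/-- total influence `I[f]`. -/
def totalInf {n : ℕ} (f : (Fin n → Bool) → Bool) : ℝ := ∑ i, infl f i

/-- restriction of `f` fixing the coordinates in `H` according to `α`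
(viewed as a function on the full cube not depending on the coordinates in `H`). -/
def restrict {n : ℕ} (f : (Fin n → Bool) → Bool) (H : Finset (Fin n))
    (α : Fin n → Bool) : (Fin n → Bool) → Bool :=
  fun x => f (fun i => if i ∈ H then α i else x i)

/-- certificate complexity of `f` at `x`. -/
def certAt {n : ℕ} (f : (Fin n → Bool) → Bool) (x : Fin n → Bool) : ℕ :=
  sInf {k | ∃ S : Finset (Fin n), S.card = k ∧
    ∀ y, (∀ i ∈ S, y i = x i) → f y = f x}

/-- certificate complexity `C(f)`. -/
def certC {n : ℕ} (f : (Fin n → Bool) → Bool) : ℕ := Finset.univ.sup (certAt f)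

/-- `f` is in standard form: `f(0) = 0` and `f(e_i) = 1` for every basis vector. -/
def stdForm {b : ℕ} (f : (Fin b → Bool) → Bool) : Prop :=
  f (fun _ => false) = false ∧ ∀ i : Fin b, f (fun j => decide (j = i)) = true

end

end BF

open BF

section MK7aux
open Finset Polynomial

theorem mk7_IccFac (m : ℕ) : (∏ j ∈ Icc 1 m, j) = Nat.factorial m := by
  rw [← Finset.Ico_add_one_right_eq_Icc, Finset.prod_Ico_id_eq_factorial]
theorem mk7_L3 (N i : ℕ) : (∏ j ∈ Icc 1 N, (j + i)) * (Nat.factorial i) = Nat.factorial (N + i) := by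
  induction N with
  | zero => simp
  | succ n ih =>
    rw [Finset.prod_Icc_succ_top (by omega), mul_comm (∏ j ∈ Icc 1 n, (j+i)), mul_assoc, ih,
      show n + 1 + i = (n + i) + 1 by omega, Nat.factorial_succ]
theorem mk7_L5 (m : ℕ) : (∏ j ∈ Icc 1 m, (m + 1 - j)) = Nat.factorial m := by
  rw [← mk7_IccFac m]
  refine Finset.prod_nbij' (fun j => m + 1 - j) (fun j => m + 1 - j) ?_ ?_ ?_ ?_ ?_ <;>
    intros a ha <;> simp only [Finset.mem_Icc] at * <;> omega
theorem mk7_L6 (N i : ℕ) : (∏ j ∈ Icc (i+1) N, (j - i)) = Nat.factorial (N - i) := by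
  rw [← mk7_IccFac (N - i)]
  refine Finset.prod_nbij' (fun j => j - i) (fun j => j + i) ?_ ?_ ?_ ?_ ?_ <;>
    intros a ha <;> simp only [Finset.mem_Icc] at * <;> omega
theorem mk7_Esplit (N i : ℕ) (hi : i ≤ N) : (Icc 1 N).erase i = Icc 1 (i-1) ∪ Icc (i+1) N := by
  ext j; simp only [Finset.mem_erase, Finset.mem_Icc, Finset.mem_union]; omega

theorem mk7_absL (N i : ℕ) (h1 : 1 ≤ i) (h2 : i ≤ N) :
    ∏ j ∈ (Icc 1 N).erase i, ((j:ℝ)^2 / |(j:ℝ)^2 - (i:ℝ)^2|)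
      = 2 * (Nat.factorial N : ℝ)^2
        / (Nat.factorial (N-i) * Nat.factorial (N+i)) := by
  have hi : i ∈ Icc 1 N := by simp only [Finset.mem_Icc]; omega
  -- numerator
  have hP1 : (∏ j ∈ (Icc 1 N).erase i, (j:ℕ)) * i = Nat.factorial N := by
    rw [Finset.prod_erase_mul _ _ hi, mk7_IccFac]
  -- (j+i) product
  have hP2 : (∏ j ∈ (Icc 1 N).erase i, (j+i)) * (2*i) * Nat.factorial i
      = Nat.factorial (N+i) := by
    have h := Finset.prod_erase_mul (Icc 1 N) (fun j => j + i) hi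
    rw [show 2*i = i + i by ring, h, mk7_L3]
  -- |j - i| product
  have hP3 : ∏ j ∈ (Icc 1 N).erase i, |(j:ℝ) - (i:ℝ)|
      = (Nat.factorial (i-1) : ℝ) * Nat.factorial (N-i) := by
    rw [mk7_Esplit N i h2, Finset.prod_union (by
      simp only [Finset.disjoint_left, Finset.mem_Icc]; omega)]
    have e1 : ∏ j ∈ Icc 1 (i-1), |(j:ℝ) - (i:ℝ)| = (Nat.factorial (i-1) : ℝ) := by
      rw [show (Nat.factorial (i-1)) = ∏ j ∈ Icc 1 (i-1), ((i-1) + 1 - j) from (mk7_L5 _).symm]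
      push_cast [Nat.cast_prod]
      refine Finset.prod_congr rfl fun j hj => ?_
      simp only [Finset.mem_Icc] at hj
      rw [Nat.cast_sub (by omega)]
      have : (j:ℝ) ≤ (i:ℝ) := by exact_mod_cast Nat.le_of_lt (by omega)
      push_cast [Nat.cast_sub (show 1 ≤ i by omega)]
      rw [abs_sub_comm, abs_of_nonneg (by linarith)]
      ring
    have e2 : ∏ j ∈ Icc (i+1) N, |(j:ℝ) - (i:ℝ)| = (Nat.factorial (N-i) : ℝ) := by
      rw [show (Nat.factorial (N-i)) = ∏ j ∈ Icc (i+1) N, (j - i) from (mk7_L6 N i).symm]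
      push_cast [Nat.cast_prod]
      refine Finset.prod_congr rfl fun j hj => ?_
      simp only [Finset.mem_Icc] at hj
      rw [Nat.cast_sub (by omega)]
      have : (i:ℝ) ≤ (j:ℝ) := by exact_mod_cast Nat.le_of_lt (by omega)
      rw [abs_of_nonneg (by linarith)]
    rw [e1, e2]
  -- assemble
  have habs : ∏ j ∈ (Icc 1 N).erase i, |(j:ℝ)^2 - (i:ℝ)^2|
      = (∏ j ∈ (Icc 1 N).erase i, |(j:ℝ) - (i:ℝ)|)
        * ∏ j ∈ (Icc 1 N).erase i, ((j:ℝ) + (i:ℝ)) := by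
    rw [← Finset.prod_mul_distrib]
    refine Finset.prod_congr rfl fun j hj => ?_
    rw [show (j:ℝ)^2 - (i:ℝ)^2 = ((j:ℝ) - i) * ((j:ℝ) + i) by ring, abs_mul]
    congr 1
    exact abs_of_nonneg (by positivity)
  rw [Finset.prod_div_distrib, habs, hP3]
  have hnum : ∏ j ∈ (Icc 1 N).erase i, (j:ℝ)^2
      = ((∏ j ∈ (Icc 1 N).erase i, (j:ℕ) : ℕ) : ℝ)^2 := by
    push_cast
    rw [Finset.prod_pow]
  have hplus : ∏ j ∈ (Icc 1 N).erase i, ((j:ℝ) + (i:ℝ))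
      = ((∏ j ∈ (Icc 1 N).erase i, (j+i) : ℕ) : ℝ) := by
    push_cast; ring
  rw [hnum, hplus]
  -- now pure arithmetic with the nat facts
  have c1 : ((∏ j ∈ (Icc 1 N).erase i, (j:ℕ) : ℕ) : ℝ) * (i:ℝ) = (Nat.factorial N : ℝ) := by
    exact_mod_cast congrArg (Nat.cast : ℕ → ℝ) hP1
  have c2 : ((∏ j ∈ (Icc 1 N).erase i, (j+i) : ℕ) : ℝ) * (2 * (i:ℝ)) * (Nat.factorial i : ℝ)
      = (Nat.factorial (N+i) : ℝ) := by
    exact_mod_cast congrArg (Nat.cast : ℕ → ℝ) hP2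
  have c3 : (i:ℝ) * (Nat.factorial (i-1) : ℝ) = (Nat.factorial i : ℝ) := by
    exact_mod_cast congrArg (Nat.cast : ℕ → ℝ) (Nat.mul_factorial_pred (by omega))
  have hi0 : (i:ℝ) ≠ 0 := by
    simp only [ne_eq, Nat.cast_eq_zero]; omega
  have hB : ((∏ j ∈ (Icc 1 N).erase i, (j+i) : ℕ) : ℝ) ≠ 0 := by
    simp only [ne_eq, Nat.cast_eq_zero]
    exact (Finset.prod_pos fun j _ => by omega).ne'
  have hf1 : (Nat.factorial (i-1) : ℝ) ≠ 0 := by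
    exact_mod_cast Nat.factorial_ne_zero _
  have hf2 : (Nat.factorial (N-i) : ℝ) ≠ 0 := by
    exact_mod_cast Nat.factorial_ne_zero _
  rw [← c1, ← c2, ← c3]
  field_simp

theorem mk7_chooseSum (N : ℕ) : 2 * ∑ i ∈ Icc 1 N, Nat.choose (2*N) (N+i) ≤ 4^N := by
  have hsym : ∑ i ∈ Icc 1 N, Nat.choose (2*N) (N+i)
      = ∑ j ∈ range N, Nat.choose (2*N) j := by
    refine Finset.sum_nbij' (fun i => N - i) (fun j => N - j) ?_ ?_ ?_ ?_ ?_ <;>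
      intro a ha <;> simp only [Finset.mem_Icc, Finset.mem_range] at *
    · omega
    · omega
    · omega
    · omega
    · rw [show N - a = 2*N - (N+a) by omega, Nat.choose_symm (by omega)]
  have hshift : ∑ j ∈ range N, Nat.choose (2*N) (N+1+j)
      = ∑ i ∈ Icc 1 N, Nat.choose (2*N) (N+i) := by
    refine Finset.sum_nbij' (fun j => j + 1) (fun i => i - 1) ?_ ?_ ?_ ?_ ?_ <;>
      intro a ha <;> simp only [Finset.mem_Icc, Finset.mem_range] at * <;> try omega
    rw [show N + (a+1) = N + 1 + a by omega]
  have htot : ∑ j ∈ range (2*N+1), Nat.choose (2*N) j = 4^N := by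
    rw [Nat.sum_range_choose, show 4 = 2^2 by norm_num, ← pow_mul, mul_comm 2 N]
  have hsplit : ∑ j ∈ range (2*N+1), Nat.choose (2*N) j
      = (∑ j ∈ range N, Nat.choose (2*N) j + Nat.choose (2*N) N)
        + ∑ j ∈ range N, Nat.choose (2*N) (N+1+j) := by
    rw [show 2*N+1 = (N+1) + N by omega, Finset.sum_range_add, Finset.sum_range_succ]
  omega

theorem mk7_sumBound (N : ℕ) (hN : 1 ≤ N) :
    ∑ i ∈ Icc 1 N, ((N:ℝ)/i) * (2 * (Nat.factorial N : ℝ)^2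
      / (Nat.factorial (N-i) * Nat.factorial (N+i)))
    ≤ (2*(N:ℝ) - 1)^2 := by
  rcases eq_or_lt_of_le hN with h1 | h2
  · -- N = 1
    rw [← h1]
    norm_num [Nat.factorial]
  -- N ≥ 2
  have key : ∀ i ∈ Icc 1 N,
      ((N:ℝ)/i) * (2 * (Nat.factorial N : ℝ)^2
        / (Nat.factorial (N-i) * Nat.factorial (N+i)))
      ≤ (N:ℝ) * (2 * (Nat.factorial N : ℝ)^2 / Nat.factorial (2*N)
          * Nat.choose (2*N) (N+i)) := by
    intro i hi
    simp only [Finset.mem_Icc] at hi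
    have hfid : (Nat.choose (2*N) (N+i) : ℝ) * (Nat.factorial (N+i)) * (Nat.factorial (N-i))
        = (Nat.factorial (2*N) : ℝ) := by
      have h := Nat.choose_mul_factorial_mul_factorial (show N+i ≤ 2*N by omega)
      rw [show 2*N - (N+i) = N - i by omega] at h
      exact_mod_cast congrArg (Nat.cast : ℕ → ℝ) h
    have h1 : ((N:ℝ)/i) ≤ (N:ℝ) := by
      have : (1:ℝ) ≤ (i:ℝ) := by exact_mod_cast hi.1
      rw [div_le_iff₀ (by linarith)]
      nlinarith [Nat.cast_nonneg (α := ℝ) N]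
    have h2 : (2 * (Nat.factorial N : ℝ)^2 / (Nat.factorial (N-i) * Nat.factorial (N+i)))
        = 2 * (Nat.factorial N : ℝ)^2 / Nat.factorial (2*N) * Nat.choose (2*N) (N+i) := by
      rw [← hfid]
      have hc : (Nat.choose (2*N) (N+i) : ℝ) ≠ 0 := by
        exact_mod_cast (Nat.choose_pos (show N+i ≤ 2*N by omega)).ne'
      have hf1 : (Nat.factorial (N+i) : ℝ) ≠ 0 := by exact_mod_cast Nat.factorial_ne_zero _
      have hf2 : (Nat.factorial (N-i) : ℝ) ≠ 0 := by exact_mod_cast Nat.factorial_ne_zero _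
      field_simp
    rw [h2]
    apply mul_le_mul_of_nonneg_right h1
    positivity
  calc ∑ i ∈ Icc 1 N, ((N:ℝ)/i) * (2 * (Nat.factorial N : ℝ)^2
      / (Nat.factorial (N-i) * Nat.factorial (N+i)))
      ≤ ∑ i ∈ Icc 1 N, (N:ℝ) * (2 * (Nat.factorial N : ℝ)^2 / Nat.factorial (2*N)
          * Nat.choose (2*N) (N+i)) := Finset.sum_le_sum key
    _ = (N:ℝ) * (2 * (Nat.factorial N : ℝ)^2 / Nat.factorial (2*N))
          * ((∑ i ∈ Icc 1 N, Nat.choose (2*N) (N+i) : ℕ) : ℝ) := by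
        rw [← Finset.mul_sum, ← Finset.mul_sum]
        push_cast
        ring
    _ ≤ (N:ℝ) * (2 * (Nat.factorial N : ℝ)^2 / Nat.factorial (2*N)) * ((4^N : ℝ)/2) := by
        apply mul_le_mul_of_nonneg_left _ (by positivity)
        have h := mk7_chooseSum N
        have h2 : ((∑ i ∈ Icc 1 N, Nat.choose (2*N) (N+i) : ℕ) : ℝ) * 2 ≤ (4:ℝ)^N := by
          exact_mod_cast (by omega : (∑ i ∈ Icc 1 N, Nat.choose (2*N) (N+i)) * 2 ≤ 4^N)
        linarith
    _ ≤ (2*(N:ℝ) - 1)^2 := by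
        have hCBf : (Nat.centralBinom N : ℝ) * (Nat.factorial N : ℝ)^2
            = (Nat.factorial (2*N) : ℝ) := by
          have h := Nat.choose_mul_factorial_mul_factorial (show N ≤ 2*N by omega)
          rw [show 2*N - N = N by omega] at h
          have : (Nat.centralBinom N) * (Nat.factorial N) * (Nat.factorial N)
              = Nat.factorial (2*N) := h
          rw [sq, ← mul_assoc]
          exact_mod_cast congrArg (Nat.cast : ℕ → ℝ) this
        have hCB : (0:ℝ) < (Nat.centralBinom N : ℝ) := by
          exact_mod_cast Nat.centralBinom_pos N
        have h4 : (4:ℝ)^N ≤ 2*(N:ℝ)*(Nat.centralBinom N : ℝ) := by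
          exact_mod_cast Nat.four_pow_le_two_mul_self_mul_centralBinom N (by omega)
        have hfne : (Nat.factorial (2*N) : ℝ) ≠ 0 := by exact_mod_cast Nat.factorial_ne_zero _
        have heq : (N:ℝ) * (2 * (Nat.factorial N : ℝ)^2 / Nat.factorial (2*N)) * ((4^N : ℝ)/2)
            = (N:ℝ) * (4:ℝ)^N / (Nat.centralBinom N : ℝ) := by
          rw [← hCBf]
          have hfN : (Nat.factorial N : ℝ) ≠ 0 := by exact_mod_cast Nat.factorial_ne_zero _
          field_simp
        rw [heq]
        have hN2 : (2:ℝ) ≤ (N:ℝ) := by exact_mod_cast h2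
        have step1 : (N:ℝ) * (4:ℝ)^N / (Nat.centralBinom N : ℝ) ≤ 2*(N:ℝ)^2 := by
          rw [div_le_iff₀ hCB]
          nlinarith [Nat.cast_nonneg (α := ℝ) N]
        nlinarith

end MK7aux

open Polynomial

/-- Markov brothers' inequality (k = 1 case, at 0): if `p` has degree
at most `d` and `|p(x)| ≤ 5/6` on `[-1,1]`, then `|p'(0)| ≤ (5/6)·d²`. -/

theorem stmt7 (d : ℕ) (p : Polynomial ℝ) (hdeg : p.natDegree ≤ d)
    (hp : ∀ x ∈ Set.Icc (-1 : ℝ) 1, |p.eval x| ≤ 5 / 6) :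
    |(Polynomial.derivative p).eval 0| ≤ 5 / 6 * (d : ℝ) ^ 2 := by
  have hd0 : (Polynomial.derivative p).eval 0 = p.coeff 1 := by
    rw [← Polynomial.coeff_zero_eq_eval_zero, Polynomial.coeff_derivative]
    simp
  rcases Nat.eq_zero_or_pos d with rfl | hd
  · -- d = 0
    have : p = Polynomial.C (p.coeff 0) := Polynomial.eq_C_of_natDegree_le_zero hdeg
    rw [hd0, this]
    simp
  -- d ≥ 1
  set N : ℕ := (d+1)/2 with hNdef
  have hN1 : 1 ≤ N := by omega
  have h2N : 2*N - 1 ≤ d := by omega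
  have hNR : (0:ℝ) < (N:ℝ) := by exact_mod_cast hN1
  set t : ℕ → ℝ := fun k => ((k:ℝ)/N)^2 with ht
  set s : Finset ℕ := Icc 1 N with hs
  have hcard : s.card = N := by rw [hs, Nat.card_Icc]; omega
  have hinj : Set.InjOn t s := by
    intro a ha b hb hab
    simp only [hs, Finset.coe_Icc, Set.mem_Icc] at ha hb
    simp only [ht] at hab
    have ha0 : (0:ℝ) < (a:ℝ) := by exact_mod_cast ha.1
    have hb0 : (0:ℝ) < (b:ℝ) := by exact_mod_cast hb.1
    have h1 : (a:ℝ)/N = (b:ℝ)/N := (sq_eq_sq₀ (by positivity) (by positivity)).mp hab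
    field_simp at h1
    exact_mod_cast h1
  -- interpolation at 0 for monomials
  have key1 : ∀ j : ℕ, j < N →
      ∑ i ∈ s, (t i)^j * (Lagrange.basis s t i).eval 0 = if j = 0 then 1 else 0 := by
    intro j hj
    have hdegf : ((X:ℝ[X])^j).degree < s.card := by
      rw [Polynomial.degree_X_pow, hcard]
      exact_mod_cast hj
    have h := Lagrange.eq_interpolate hinj hdegf
    have h0 := congrArg (Polynomial.eval 0) h
    rw [Lagrange.interpolate_apply] at h0
    simp only [Polynomial.eval_pow, Polynomial.eval_X, Polynomial.eval_finset_sum,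
      Polynomial.eval_mul, Polynomial.eval_C] at h0
    rw [← h0]
    rcases Nat.eq_zero_or_pos j with rfl | hjpos
    · simp
    · rw [if_neg hjpos.ne', zero_pow hjpos.ne']
  set w : ℕ → ℝ := fun i => (Lagrange.basis s t i).eval 0 / ((i:ℝ)/N) with hw
  -- main identity
  have key2 : p.coeff 1 = ∑ i ∈ s, w i * ((p.eval ((i:ℝ)/N) - p.eval (-((i:ℝ)/N)))/2) := by
    have heval : ∀ x : ℝ, p.eval x = ∑ n ∈ range (d+1), p.coeff n * x^n := fun x =>
      Polynomial.eval_eq_sum_range' (lt_of_le_of_lt hdeg (by omega)) x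
    have inner : ∀ n ∈ range (d+1),
        ∑ i ∈ s, w i * ((((i:ℝ)/N)^n - (-((i:ℝ)/N))^n)/2) = if n = 1 then 1 else 0 := by
      intro n hn
      simp only [Finset.mem_range] at hn
      rcases Nat.even_or_odd n with he | ho
      · rw [if_neg (by rintro rfl; exact (Nat.not_even_iff_odd.mpr odd_one) he)]
        refine Finset.sum_eq_zero fun i hi => ?_
        rw [he.neg_pow]
        ring
      · obtain ⟨j, hj⟩ := ho
        have hjN : j < N := by omega
        have step : ∀ i ∈ s, w i * ((((i:ℝ)/N)^n - (-((i:ℝ)/N))^n)/2)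
            = (t i)^j * (Lagrange.basis s t i).eval 0 := by
          intro i hi
          simp only [hs, Finset.mem_Icc] at hi
          have hy0 : ((i:ℝ)/N) ≠ 0 := by
            have : (0:ℝ) < (i:ℝ) := by exact_mod_cast hi.1
            positivity
          have hodd : Odd n := ⟨j, hj⟩
          rw [hodd.neg_pow]
          have hyn : ((i:ℝ)/N)^n = ((i:ℝ)/N) * (t i)^j := by
            rw [ht, hj]
            rw [show 2*j+1 = 2*j + 1 from rfl, pow_succ, pow_mul]
            ring
          have hii : (i:ℝ) ≠ 0 := by
            have : (0:ℝ) < (i:ℝ) := by exact_mod_cast hi.1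
            exact this.ne'
          have hNne : (N:ℝ) ≠ 0 := hNR.ne'
          rw [hyn, hw]
          field_simp
          ring
        rw [Finset.sum_congr rfl step, key1 j hjN]
        have : j = 0 ↔ n = 1 := by omega
        split_ifs with h1 h2 h2 <;> first | rfl | omega
    symm
    calc ∑ i ∈ s, w i * ((p.eval ((i:ℝ)/N) - p.eval (-((i:ℝ)/N)))/2)
        = ∑ i ∈ s, ∑ n ∈ range (d+1),
            p.coeff n * (w i * ((((i:ℝ)/N)^n - (-((i:ℝ)/N))^n)/2)) := by
          refine Finset.sum_congr rfl fun i hi => ?_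
          rw [heval ((i:ℝ)/N), heval (-((i:ℝ)/N)), ← Finset.sum_sub_distrib, Finset.sum_div,
            Finset.mul_sum]
          refine Finset.sum_congr rfl fun n hn => by ring
      _ = ∑ n ∈ range (d+1), p.coeff n
            * ∑ i ∈ s, w i * ((((i:ℝ)/N)^n - (-((i:ℝ)/N))^n)/2) := by
          rw [Finset.sum_comm]
          exact Finset.sum_congr rfl fun n _ => by rw [Finset.mul_sum]
      _ = p.coeff 1 := by
          rw [Finset.sum_congr rfl fun n hn => by rw [inner n hn]]
          simp only [mul_ite, mul_one, mul_zero]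
          rw [Finset.sum_ite_eq' (range (d+1)) 1 p.coeff]
          rw [if_pos (by simp only [Finset.mem_range]; omega)]
  -- |w i| formula
  have key3 : ∀ i ∈ s, |w i| = ((N:ℝ)/i) * (2 * (Nat.factorial N : ℝ)^2
      / (Nat.factorial (N-i) * Nat.factorial (N+i))) := by
    intro i hi
    simp only [hs, Finset.mem_Icc] at hi
    have hii : (0:ℝ) < (i:ℝ) := by exact_mod_cast hi.1
    have habsb : |(Lagrange.basis s t i).eval 0|
        = ∏ j ∈ (Icc 1 N).erase i, ((j:ℝ)^2 / |(j:ℝ)^2 - (i:ℝ)^2|) := by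
      rw [Lagrange.basis, Polynomial.eval_prod, Finset.abs_prod, hs]
      refine Finset.prod_congr rfl fun j hj => ?_
      simp only [Finset.mem_erase, Finset.mem_Icc] at hj
      have hjj : (0:ℝ) < (j:ℝ) := by exact_mod_cast hj.2.1
      have hij : (j:ℝ)^2 - (i:ℝ)^2 ≠ 0 := by
        have : (j:ℝ) ≠ (i:ℝ) := by exact_mod_cast hj.1
        intro hcon
        exact this ((sq_eq_sq₀ hjj.le hii.le).mp (by linarith))
      have hev : (Lagrange.basisDivisor (t i) (t j)).eval 0 = (t i - t j)⁻¹ * (0 - t j) := by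
        rw [Lagrange.basisDivisor]
        simp
      rw [hev]
      have htd : t i - t j = ((i:ℝ)^2 - (j:ℝ)^2) / (N:ℝ)^2 := by
        rw [ht]
        field_simp
      have htj : (0:ℝ) - t j = -((j:ℝ)^2 / (N:ℝ)^2) := by
        rw [ht]
        field_simp
        ring
      rw [htd, htj, abs_mul, abs_neg, abs_inv, abs_div, abs_div]
      rw [abs_of_nonneg (show (0:ℝ) ≤ (j:ℝ)^2 by positivity),
        abs_of_nonneg (show (0:ℝ) ≤ (N:ℝ)^2 by positivity)]
      rw [show |(i:ℝ)^2 - (j:ℝ)^2| = |(j:ℝ)^2 - (i:ℝ)^2| from abs_sub_comm _ _]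
      have habsne : |(j:ℝ)^2 - (i:ℝ)^2| ≠ 0 := abs_ne_zero.mpr hij
      field_simp
    have : |w i| = |(Lagrange.basis s t i).eval 0| * ((N:ℝ)/i) := by
      rw [hw]
      simp only []
      rw [abs_div, abs_of_nonneg (show (0:ℝ) ≤ (i:ℝ)/N by positivity), div_div_eq_mul_div]
      field_simp
    rw [this, habsb, mk7_absL N i hi.1 hi.2]
    ring
  -- final assembly
  have hsum : ∑ i ∈ s, |w i| ≤ ((d:ℝ))^2 := by
    have h1 : ∑ i ∈ s, |w i| ≤ (2*(N:ℝ) - 1)^2 := by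
      rw [Finset.sum_congr rfl key3]
      exact mk7_sumBound N hN1
    have h2 : (2*(N:ℝ) - 1)^2 ≤ ((d:ℝ))^2 := by
      have hle : ((2*N - 1 : ℕ):ℝ) ≤ (d:ℝ) := by exact_mod_cast h2N
      have hcast : ((2*N - 1 : ℕ):ℝ) = 2*(N:ℝ) - 1 := by
        push_cast [Nat.cast_sub (by omega : 1 ≤ 2*N)]
        ring
      have hnn : (0:ℝ) ≤ 2*(N:ℝ) - 1 := by
        rw [← hcast]; positivity
      rw [← hcast] at *
      exact pow_le_pow_left₀ hnn hle 2
    linarith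
  have hterm : ∀ i ∈ s, |w i * ((p.eval ((i:ℝ)/N) - p.eval (-((i:ℝ)/N)))/2)|
      ≤ |w i| * (5/6) := by
    intro i hi
    simp only [hs, Finset.mem_Icc] at hi
    have hii : (0:ℝ) < (i:ℝ) := by exact_mod_cast hi.1
    have hiN : (i:ℝ) ≤ (N:ℝ) := by exact_mod_cast hi.2
    have hy1 : (i:ℝ)/N ∈ Set.Icc (-1:ℝ) 1 := by
      constructor
      · have : (0:ℝ) ≤ (i:ℝ)/N := by positivity
        linarith
      · rw [div_le_one hNR]; exact hiN
    have hy2 : -((i:ℝ)/N) ∈ Set.Icc (-1:ℝ) 1 := by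
      obtain ⟨a, b⟩ := hy1
      constructor <;> [linarith; linarith]
    rw [abs_mul]
    apply mul_le_mul_of_nonneg_left _ (abs_nonneg _)
    calc |(p.eval ((i:ℝ)/N) - p.eval (-((i:ℝ)/N)))/2|
        = |p.eval ((i:ℝ)/N) - p.eval (-((i:ℝ)/N))|/2 := by
          rw [abs_div]; norm_num
      _ ≤ (|p.eval ((i:ℝ)/N)| + |p.eval (-((i:ℝ)/N))|)/2 := by
          have := abs_sub (p.eval ((i:ℝ)/N)) (p.eval (-((i:ℝ)/N)))
          linarith [abs_sub_abs_le_abs_sub (p.eval ((i:ℝ)/N)) (p.eval (-((i:ℝ)/N))),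
            abs_sub_le (p.eval ((i:ℝ)/N)) 0 (p.eval (-((i:ℝ)/N)))]
      _ ≤ (5/6 + 5/6)/2 := by
          have := hp _ hy1
          have := hp _ hy2
          linarith
      _ = 5/6 := by norm_num
  calc |(Polynomial.derivative p).eval 0| = |p.coeff 1| := by rw [hd0]
    _ = |∑ i ∈ s, w i * ((p.eval ((i:ℝ)/N) - p.eval (-((i:ℝ)/N)))/2)| := by rw [key2]
    _ ≤ ∑ i ∈ s, |w i * ((p.eval ((i:ℝ)/N) - p.eval (-((i:ℝ)/N)))/2)| :=
        Finset.abs_sum_le_sum_abs _ _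
    _ ≤ ∑ i ∈ s, |w i| * (5/6) := Finset.sum_le_sum hterm
    _ = (∑ i ∈ s, |w i|) * (5/6) := by rw [← Finset.sum_mul]
    _ ≤ ((d:ℝ))^2 * (5/6) := by
        apply mul_le_mul_of_nonneg_right hsum (by norm_num)
    _ = 5/6 * ((d:ℝ))^2 := by ring
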